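/- Let p be an odd prime, r an even positive integer, and n ≥ 1. Then A^r_{p·n} ≡ A^r_n (mod p). -/

import Mathlib

open Finset

/-- The descent set of a permutation `π` of `{1,…,n}` (realized as `Equiv.Perm (Fin n)`),
as a subset of `[n-1] = {1,…,n-1}`: those positions `i` with `π_i > π_{i+1}`. -/
def descSet (n : ℕ) (π : Equiv.Perm (Fin n)) : Finset ℕ :=
  (Finset.Icc 1 (n - 1)).filter fun i =>
    ∀ (h1 : i - 1 < n) (h2 : i < n), π ⟨i, h2⟩ < π ⟨i - 1, h1⟩

/-- The descent set statistic `β_n(S)`: the number of permutations of `{1,…,n}`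
with descent set exactly `S`. -/
def descStat (n : ℕ) (S : Finset ℕ) : ℕ :=
  (Finset.univ.filter fun π : Equiv.Perm (Fin n) => descSet n π = S).card

/-- `A^r_n = Σ_{S ⊆ [n-1]} β_n(S)^r`. -/
def powSumDes (r n : ℕ) : ℕ :=
  ∑ S ∈ (Finset.Icc 1 (n - 1)).powerset, descStat n S ^ r

/-- α_n(S): number of permutations with descent set contained in S. -/
def alphaP (n : ℕ) (S : Finset ℕ) : ℕ :=
  (Finset.univ.filter fun π : Equiv.Perm (Fin n) => descSet n π ⊆ S).card

lemma mem_descSet_iff {n : ℕ} (π : Equiv.Perm (Fin n)) {i : ℕ} (hi1 : 1 ≤ i) (hi2 : i < n) :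
    i ∈ descSet n π ↔ π ⟨i, hi2⟩ < π ⟨i - 1, lt_of_le_of_lt (Nat.sub_le i 1) hi2⟩ := by
  constructor
  · rintro h
    rw [descSet, mem_filter] at h
    exact h.2 _ _
  · intro h
    rw [descSet, mem_filter, mem_Icc]
    exact ⟨⟨hi1, by omega⟩, fun _ _ => h⟩

lemma of_mem_descSet {n : ℕ} {π : Equiv.Perm (Fin n)} {i : ℕ} (h : i ∈ descSet n π) :
    1 ≤ i ∧ i < n := by
  rw [descSet, mem_filter, mem_Icc] at h
  omega

lemma ascent_step {n : ℕ} (π : Equiv.Perm (Fin n)) {j : ℕ} (hj1 : 1 ≤ j) (hj2 : j < n)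
    (h : j ∉ descSet n π) :
    π ⟨j - 1, lt_of_le_of_lt (Nat.sub_le j 1) hj2⟩ < π ⟨j, hj2⟩ := by
  rw [mem_descSet_iff π hj1 hj2] at h
  rcases lt_or_eq_of_le (le_of_not_gt h) with h' | h'
  · exact h'
  · exfalso
    have := π.injective (Fin.ext (congrArg Fin.val h') : π ⟨j-1, _⟩ = π ⟨j, _⟩)
    have := congrArg Fin.val this
    simp at this
    omega

lemma ascent_run {n : ℕ} (π : Equiv.Perm (Fin n)) (k : ℕ) : ∀ (a : ℕ) (ha : a + k < n),
    (∀ j, a < j → j ≤ a + k → j ∉ descSet n π) → 1 ≤ k →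
    π ⟨a, by omega⟩ < π ⟨a + k, ha⟩ := by
  induction k with
  | zero => omega
  | succ k ih =>
    intro a ha hnd _
    have step : π ⟨a + k, by omega⟩ < π ⟨a + k + 1, by omega⟩ := by
      have := ascent_step π (j := a + k + 1) (by omega) (by omega)
        (hnd _ (by omega) (by omega))
      exact this
    rcases Nat.eq_zero_or_pos k with rfl | hk
    · simpa using step
    · exact lt_trans (ih a (by omega) (fun j h1 h2 => hnd j h1 (by omega)) hk) step

lemma strictMono_of_descSet_empty {n : ℕ} (π : Equiv.Perm (Fin n))
    (h : ∀ j, 1 ≤ j → j < n → j ∉ descSet n π) : StrictMono π := by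
  intro a b hab
  have hab' : (a : ℕ) < (b : ℕ) := hab
  have key := ascent_run π ((b : ℕ) - (a : ℕ)) (a : ℕ) (by omega)
    (fun j h1 h2 => h j (by omega) (by omega)) (by omega)
  have e1 : (⟨(a : ℕ), by omega⟩ : Fin n) = a := Fin.eta a _
  have e2 : (⟨(a : ℕ) + ((b : ℕ) - (a : ℕ)), by omega⟩ : Fin n) = b := Fin.ext (by simp only [Fin.val_mk]; omega)
  rwa [e1, e2] at key

lemma perm_eq_one_of_strictMono {n : ℕ} (π : Equiv.Perm (Fin n)) (h : StrictMono π) : π = 1 := by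
  have h1 : ⇑π = (univ : Finset (Fin n)).orderEmbOfFin (by simp) :=
    Finset.orderEmbOfFin_unique (by simp) (fun x => mem_univ _) h
  have h2 : (id : Fin n → Fin n) = (univ : Finset (Fin n)).orderEmbOfFin (by simp) :=
    Finset.orderEmbOfFin_unique (by simp) (fun x => mem_univ _) strictMono_id
  ext i : 1
  have := congrFun (h1.trans h2.symm) i
  simpa using this

lemma alphaP_empty (n : ℕ) : alphaP n ∅ = 1 := by
  have key : ∀ π : Equiv.Perm (Fin n), descSet n π ⊆ ∅ ↔ π = 1 := by
    intro π
    constructor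
    · intro h
      exact perm_eq_one_of_strictMono π (strictMono_of_descSet_empty π
        (fun j h1 h2 hj => by simpa using h hj))
    · rintro rfl i hi
      obtain ⟨h1, h2⟩ := of_mem_descSet hi
      rw [mem_descSet_iff _ h1 h2] at hi
      simp only [Equiv.Perm.coe_one, id_eq] at hi
      rw [Fin.lt_def] at hi
      simp at hi
      omega
  rw [alphaP]
  rw [show (Finset.univ.filter fun π : Equiv.Perm (Fin n) => descSet n π ⊆ ∅) = {1} by
    ext π
    simp only [mem_filter, mem_univ, true_and, mem_singleton]
    exact key π]
  simp

lemma alphaP_eq_sum (n : ℕ) (S : Finset ℕ) :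
    alphaP n S = ∑ T ∈ S.powerset, descStat n T := by
  rw [alphaP, Finset.card_eq_sum_card_fiberwise
    (f := fun π => descSet n π) (t := S.powerset) (fun π hπ => by
      simp only [mem_coe, mem_filter] at hπ; exact mem_powerset.2 hπ.2)]
  refine Finset.sum_congr rfl fun T hT => ?_
  rw [descStat, Finset.filter_filter]
  congr 1
  apply Finset.filter_congr
  intro π _
  simp only [mem_powerset] at hT
  constructor
  · exact fun h => h.2
  · exact fun h => ⟨h ▸ hT, h⟩

lemma lucas_mul {p : ℕ} [Fact p.Prime] (a b : ℕ) :
    (((p * a).choose (p * b) : ℕ) : ZMod p) = ((a.choose b : ℕ) : ZMod p) := by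
  have hp : 0 < p := (Fact.out : p.Prime).pos
  have h := Choose.choose_modEq_choose_mod_mul_choose_div_nat (p := p) (n := p * a) (k := p * b)
  rw [Nat.mul_mod_right, Nat.mul_mod_right, Nat.mul_div_cancel_left _ hp,
    Nat.mul_div_cancel_left _ hp] at h
  have := (ZMod.natCast_eq_natCast_iff _ _ _).2 h
  simpa using this


lemma lucas_zero {p : ℕ} [Fact p.Prime] (a c : ℕ) (hc : ¬ p ∣ c) :
    (((p * a).choose c : ℕ) : ZMod p) = 0 := by
  have h := Choose.choose_modEq_choose_mod_mul_choose_div_nat (p := p) (n := p * a) (k := c)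
  have h2 := (ZMod.natCast_eq_natCast_iff _ _ _).2 h
  have hcp : c % p ≠ 0 := fun h' => hc (Nat.dvd_of_mod_eq_zero h')
  rw [h2, Nat.mul_mod_right, Nat.choose_eq_zero_of_lt (Nat.pos_of_ne_zero hcp)]
  simp

-- inner alternating sum lemma
lemma alt_sum_interval {S U : Finset ℕ} (hU : U ⊆ S) :
    ∑ T ∈ S.powerset.filter (fun T => U ⊆ T), (-1 : ℤ) ^ (S.card - T.card)
      = if U = S then 1 else 0 := by
  have key : ∑ T ∈ S.powerset.filter (fun T => U ⊆ T), (-1 : ℤ) ^ (S.card - T.card)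
      = ∑ W ∈ (S \ U).powerset, (-1 : ℤ) ^ W.card := by
    refine Finset.sum_nbij' (fun T => S \ T) (fun W => S \ W) ?_ ?_ ?_ ?_ ?_
    · intro T hT
      simp only [mem_filter, mem_powerset] at hT
      exact mem_powerset.2 (sdiff_subset_sdiff le_rfl hT.2)
    · intro W hW
      simp only [mem_powerset] at hW ⊢
      simp only [mem_filter, mem_powerset]
      constructor
      · exact sdiff_subset
      · intro x hx
        have hxS : x ∈ S := hU hx
        have hxW : x ∉ W := fun hw => (mem_sdiff.1 (hW hw)).2 hx
        exact mem_sdiff.2 ⟨hxS, hxW⟩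
    · intro T hT
      simp only [mem_filter, mem_powerset] at hT
      exact Finset.sdiff_sdiff_eq_self hT.1
    · intro W hW
      simp only [mem_powerset] at hW
      exact Finset.sdiff_sdiff_eq_self (hW.trans sdiff_subset)
    · intro T hT
      simp only [mem_filter, mem_powerset] at hT
      rw [card_sdiff_of_subset hT.1]
  rw [key, Finset.sum_powerset_neg_one_pow_card]
  have : (S \ U = ∅) ↔ (U = S) := by
    rw [sdiff_eq_empty_iff_subset]
    exact ⟨fun h => le_antisymm hU h, fun h => h ▸ le_rfl⟩
  simp only [this]

lemma descStat_eq_alt (n : ℕ) (S : Finset ℕ) :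
    (descStat n S : ℤ) = ∑ T ∈ S.powerset, (-1) ^ (S.card - T.card) * (alphaP n T : ℤ) := by
  have step1 : ∀ T : Finset ℕ, ((alphaP n T : ℕ) : ℤ) = ∑ U ∈ T.powerset, (descStat n U : ℤ) := by
    intro T; rw [alphaP_eq_sum]; push_cast; ring
  rw [show ∑ T ∈ S.powerset, (-1 : ℤ) ^ (S.card - T.card) * (alphaP n T : ℤ)
      = ∑ T ∈ S.powerset, ∑ U ∈ T.powerset, (-1 : ℤ) ^ (S.card - T.card) * (descStat n U : ℤ)
    from Finset.sum_congr rfl fun T _ => by rw [step1 T, Finset.mul_sum]]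
  rw [Finset.sum_comm' (s := S.powerset) (t := fun T => T.powerset)
    (t' := S.powerset) (s' := fun U => S.powerset.filter (fun T => U ⊆ T))
    (by
      intro T U
      simp only [mem_powerset, mem_filter]
      constructor
      · rintro ⟨h1, h2⟩; exact ⟨⟨h1, h2⟩, h2.trans h1⟩
      · rintro ⟨⟨h1, h2⟩, _⟩; exact ⟨h1, h2⟩)]
  have : ∀ U ∈ S.powerset,
      ∑ T ∈ S.powerset.filter (fun T => U ⊆ T), (-1 : ℤ) ^ (S.card - T.card) * (descStat n U : ℤ)
        = (if U = S then 1 else 0) * (descStat n U : ℤ) := by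
    intro U hU
    rw [← Finset.sum_mul, alt_sum_interval (mem_powerset.1 hU)]
  rw [Finset.sum_congr rfl this]
  rw [Finset.sum_eq_single S (fun U _ hne => by rw [if_neg hne, zero_mul])
    (fun h => absurd (mem_powerset_self S) h)]
  rw [if_pos rfl, one_mul]

section PermOf

lemma compl_card {n s : ℕ} (T : Finset (Fin n)) (hT : T.card = s) : Tᶜ.card = n - s := by
  rw [Finset.card_compl, hT, Fintype.card_fin]

def permOfFun {n s : ℕ} (hsn : s ≤ n) (T : Finset (Fin n)) (hT : T.card = s)
    (σ : Equiv.Perm (Fin s)) : Fin n → Fin n := fun i =>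
  if h : (i : ℕ) < s then T.orderEmbOfFin hT (σ ⟨i, h⟩)
  else Tᶜ.orderEmbOfFin (compl_card T hT) ⟨(i : ℕ) - s, by have := i.isLt; omega⟩

lemma permOfFun_inj {n s : ℕ} (hsn : s ≤ n) (T : Finset (Fin n)) (hT : T.card = s)
    (σ : Equiv.Perm (Fin s)) : Function.Injective (permOfFun hsn T hT σ) := by
  intro i j hij
  unfold permOfFun at hij
  by_cases hi : (i : ℕ) < s <;> by_cases hj : (j : ℕ) < s
  · rw [dif_pos hi, dif_pos hj] at hij
    have := σ.injective ((T.orderEmbOfFin hT).injective hij)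
    have := congrArg Fin.val this
    simp only [Fin.val_mk] at this
    exact Fin.ext this
  · rw [dif_pos hi, dif_neg hj] at hij
    have h1 : T.orderEmbOfFin hT (σ ⟨i, hi⟩) ∈ T := Finset.orderEmbOfFin_mem _ _ _
    have h2 : Tᶜ.orderEmbOfFin (compl_card T hT) ⟨(j : ℕ) - s, by have := j.isLt; omega⟩ ∈ Tᶜ :=
      Finset.orderEmbOfFin_mem _ _ _
    rw [hij] at h1
    exact absurd h1 (Finset.mem_compl.1 h2)
  · rw [dif_neg hi, dif_pos hj] at hij
    have h1 : T.orderEmbOfFin hT (σ ⟨j, hj⟩) ∈ T := Finset.orderEmbOfFin_mem _ _ _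
    have h2 : Tᶜ.orderEmbOfFin (compl_card T hT) ⟨(i : ℕ) - s, by have := i.isLt; omega⟩ ∈ Tᶜ :=
      Finset.orderEmbOfFin_mem _ _ _
    rw [← hij] at h1
    exact absurd h1 (Finset.mem_compl.1 h2)
  · rw [dif_neg hi, dif_neg hj] at hij
    have := (Tᶜ.orderEmbOfFin (compl_card T hT)).injective hij
    have := congrArg Fin.val this
    simp only [Fin.val_mk] at this
    exact Fin.ext (by omega)

noncomputable def permOf {n s : ℕ} (hsn : s ≤ n) (T : Finset (Fin n)) (hT : T.card = s)
    (σ : Equiv.Perm (Fin s)) : Equiv.Perm (Fin n) :=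
  Equiv.ofBijective _ (Finite.injective_iff_bijective.1 (permOfFun_inj hsn T hT σ))

lemma permOf_apply_lt {n s : ℕ} (hsn : s ≤ n) (T : Finset (Fin n)) (hT : T.card = s)
    (σ : Equiv.Perm (Fin s)) (i : Fin n) (h : (i : ℕ) < s) :
    permOf hsn T hT σ i = T.orderEmbOfFin hT (σ ⟨i, h⟩) := by
  simp only [permOf, Equiv.ofBijective_apply, permOfFun, dif_pos h]

lemma permOf_apply_ge {n s : ℕ} (hsn : s ≤ n) (T : Finset (Fin n)) (hT : T.card = s)
    (σ : Equiv.Perm (Fin s)) (i : Fin n) (h : ¬ (i : ℕ) < s) :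
    permOf hsn T hT σ i
      = Tᶜ.orderEmbOfFin (compl_card T hT) ⟨(i : ℕ) - s, by have := i.isLt; omega⟩ := by
  simp only [permOf, Equiv.ofBijective_apply, permOfFun, dif_neg h]

lemma permOf_mem_iff {n s : ℕ} (hsn : s ≤ n) (T : Finset (Fin n)) (hT : T.card = s)
    (σ : Equiv.Perm (Fin s)) (x : Fin n) :
    x ∈ T ↔ ∃ i : Fin n, (i : ℕ) < s ∧ permOf hsn T hT σ i = x := by
  constructor
  · intro hx
    obtain ⟨j, hj⟩ : ∃ j, T.orderEmbOfFin hT j = x := by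
      have := Finset.range_orderEmbOfFin T hT
      have hx' : x ∈ Set.range (T.orderEmbOfFin hT) := by rw [this]; exact hx
      exact hx'
    refine ⟨⟨(σ.symm j : ℕ), lt_of_lt_of_le (σ.symm j).isLt hsn⟩, (σ.symm j).isLt, ?_⟩
    rw [permOf_apply_lt hsn T hT σ _ (σ.symm j).isLt]
    have : (⟨((σ.symm j : Fin s) : ℕ), (σ.symm j).isLt⟩ : Fin s) = σ.symm j := Fin.eta _ _
    rw [this, Equiv.apply_symm_apply, hj]
  · rintro ⟨i, hi, rfl⟩
    rw [permOf_apply_lt hsn T hT σ i hi]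
    exact Finset.orderEmbOfFin_mem _ _ _
end PermOf

lemma card_filter_lt (n s : ℕ) (hsn : s ≤ n) :
    ((univ : Finset (Fin n)).filter fun i : Fin n => (i : ℕ) < s).card = s := by
  have : ((univ : Finset (Fin n)).filter fun i : Fin n => (i : ℕ) < s)
      = (univ : Finset (Fin s)).map (Fin.castLEEmb hsn) := by
    ext x
    simp only [mem_filter, mem_univ, true_and, mem_map, Fin.castLEEmb_apply]
    constructor
    · intro hx
      exact ⟨⟨(x : ℕ), hx⟩, Fin.ext rfl⟩
    · rintro ⟨y, rfl⟩
      exact y.isLt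
  rw [this, card_map, card_univ, Fintype.card_fin]

lemma alphaP_insert (n s : ℕ) (S : Finset ℕ) (hs1 : 1 ≤ s) (hsn : s < n)
    (hS : ∀ x ∈ S, 1 ≤ x ∧ x < s) :
    alphaP n (insert s S) = n.choose s * alphaP s S := by
  have hsn' : s ≤ n := hsn.le
  rw [alphaP, alphaP]
  rw [show n.choose s * (Finset.univ.filter fun σ : Equiv.Perm (Fin s) => descSet s σ ⊆ S).card
      = ((Finset.powersetCard s (univ : Finset (Fin n))) ×ˢ
          (Finset.univ.filter fun σ : Equiv.Perm (Fin s) => descSet s σ ⊆ S)).card by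
    rw [Finset.card_product, Finset.card_powersetCard, card_univ, Fintype.card_fin]]
  refine (Finset.card_bij
    (fun b hb => permOf hsn' b.1
      ((Finset.mem_powersetCard.1 (Finset.mem_product.1 hb).1).2) b.2) ?_ ?_ ?_).symm
  · -- maps into target
    rintro ⟨T, σ⟩ hb
    have hT := (Finset.mem_powersetCard.1 (Finset.mem_product.1 hb).1).2
    have hσ : descSet s σ ⊆ S := by
      have := (Finset.mem_product.1 hb).2
      simpa using this
    simp only [mem_filter, mem_univ, true_and]
    intro i hi
    obtain ⟨hi1, hin⟩ := of_mem_descSet hi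
    rw [mem_descSet_iff _ hi1 hin] at hi
    rcases Nat.lt_trichotomy i s with hlt | rfl | hgt
    · -- i < s : descent of σ
      have hi1s : i - 1 < s := by omega
      rw [permOf_apply_lt hsn' T hT σ _ (show ((⟨i, hin⟩ : Fin n) : ℕ) < s from hlt),
        permOf_apply_lt hsn' T hT σ _ (show ((⟨i - 1, _⟩ : Fin n) : ℕ) < s from hi1s)] at hi
    -- hi : emb (σ ⟨i,_⟩) < emb (σ ⟨i-1,_⟩)
      have hlt' : σ ⟨i, hlt⟩ < σ ⟨i - 1, hi1s⟩ := (OrderEmbedding.lt_iff_lt _).1 hi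
      have : i ∈ descSet s σ := by
        rw [mem_descSet_iff σ hi1 hlt]
        exact hlt'
      exact mem_insert_of_mem (hσ this)
    · exact mem_insert_self _ _
    · -- i > s : contradiction
      exfalso
      have h1 : ¬ ((⟨i, hin⟩ : Fin n) : ℕ) < s := by simp; omega
      have h2 : ¬ ((⟨i - 1, lt_of_le_of_lt (Nat.sub_le i 1) hin⟩ : Fin n) : ℕ) < s := by
        simp; omega
      rw [permOf_apply_ge hsn' T hT σ _ h1, permOf_apply_ge hsn' T hT σ _ h2] at hi
      have := (OrderEmbedding.lt_iff_lt _).1 hi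
      rw [Fin.lt_def] at this
      simp only [Fin.val_mk] at this
      omega
  · -- injective
    rintro ⟨T, σ⟩ hb ⟨T', σ'⟩ hb' heq
    have hT : T.card = s := (Finset.mem_powersetCard.1 (Finset.mem_product.1 hb).1).2
    have hT' : T'.card = s := (Finset.mem_powersetCard.1 (Finset.mem_product.1 hb').1).2
    have heq : permOf hsn' T hT σ = permOf hsn' T' hT' σ' := heq
    have hTT : T = T' := by
      ext x
      rw [permOf_mem_iff hsn' T hT σ x, permOf_mem_iff hsn' T' hT' σ' x]
      constructor
      · rintro ⟨i, hi, hx⟩; exact ⟨i, hi, by rw [← heq]; exact hx⟩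
      · rintro ⟨i, hi, hx⟩; exact ⟨i, hi, by rw [heq]; exact hx⟩
    subst hTT
    have hσσ : σ = σ' := by
      ext j : 1
      have hj : ((Fin.castLE hsn' j : Fin n) : ℕ) < s := j.isLt
      have h1 := permOf_apply_lt hsn' T hT σ (Fin.castLE hsn' j) hj
      have h2 := permOf_apply_lt hsn' T hT' σ' (Fin.castLE hsn' j) hj
      have : T.orderEmbOfFin hT (σ ⟨((Fin.castLE hsn' j : Fin n) : ℕ), hj⟩)
          = T.orderEmbOfFin hT' (σ' ⟨((Fin.castLE hsn' j : Fin n) : ℕ), hj⟩) := by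
        rw [← h1, ← h2, heq]
      have hembeq : T.orderEmbOfFin hT = T.orderEmbOfFin hT' := by congr
      rw [← hembeq] at this
      have := (T.orderEmbOfFin hT).injective this
      have hmk : (⟨((Fin.castLE hsn' j : Fin n) : ℕ), hj⟩ : Fin s) = j := Fin.ext rfl
      rwa [hmk] at this
    rw [hσσ]
  · -- surjective
    intro π hπ
    have hπ' : descSet n π ⊆ insert s S := by simpa using hπ
    set Tπ : Finset (Fin n) := (univ.filter fun i : Fin n => (i : ℕ) < s).image π with hTπdef
    have hTπ : Tπ.card = s := by
      rw [hTπdef, Finset.card_image_of_injective _ π.injective, card_filter_lt n s hsn']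
    have hmemT : ∀ j : Fin s, π (Fin.castLE hsn' j) ∈ Tπ := by
      intro j
      apply Finset.mem_image_of_mem
      simp only [mem_filter, mem_univ, true_and]
      exact j.isLt
    set g : Fin s → Fin s := fun j => (Tπ.orderIsoOfFin hTπ).symm ⟨π (Fin.castLE hsn' j), hmemT j⟩
      with hgdef
    have hginj : Function.Injective g := by
      intro a b hab
      rw [hgdef] at hab
      have := (Tπ.orderIsoOfFin hTπ).symm.injective hab
      have := Subtype.ext_iff.1 this
      have := π.injective this
      exact Fin.castLE_injective hsn' this
    set σπ : Equiv.Perm (Fin s) := Equiv.ofBijective g (Finite.injective_iff_bijective.1 hginj)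
      with hσπdef
    have hval : ∀ j : Fin s, Tπ.orderEmbOfFin hTπ (σπ j) = π (Fin.castLE hsn' j) := by
      intro j
      rw [hσπdef]
      simp only [Equiv.ofBijective_apply]
      rw [hgdef]
      rw [← Finset.coe_orderIsoOfFin_apply, OrderIso.apply_symm_apply]
    refine ⟨⟨Tπ, σπ⟩, ?_, ?_⟩
    · -- membership in the product
      rw [Finset.mem_product]
      constructor
      · exact Finset.mem_powersetCard.2 ⟨subset_univ _, hTπ⟩
      · simp only [mem_filter, mem_univ, true_and]
        intro i hi
        obtain ⟨hi1, his⟩ := of_mem_descSet hi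
        rw [mem_descSet_iff σπ hi1 his] at hi
        have step := (Tπ.orderEmbOfFin hTπ).strictMono hi
        rw [hval, hval] at step
        have : i ∈ descSet n π := by
          rw [mem_descSet_iff π hi1 (lt_of_lt_of_le his hsn')]
          exact step
        have := hπ' this
        rcases mem_insert.1 this with h | h
        · omega
        · exact h
    · -- permOf = π
      ext i : 1
      by_cases h : (i : ℕ) < s
      · rw [permOf_apply_lt hsn' Tπ hTπ σπ i h, hval]
        exact congrArg (⇑π) (Fin.ext rfl)
      · rw [permOf_apply_ge hsn' Tπ hTπ σπ i h]
        set F : Fin (n - s) → Fin n := fun k => π ⟨s + (k : ℕ), by omega⟩ with hFdef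
        have hFmem : ∀ k, F k ∈ Tπᶜ := by
          intro k
          rw [Finset.mem_compl]
          intro hk
          obtain ⟨j, hj, hjeq⟩ := Finset.mem_image.1 hk
          simp only [mem_filter, mem_univ, true_and] at hj
          have := π.injective hjeq
          have := congrArg Fin.val this
          simp only [Fin.val_mk] at this
          omega
        have hFmono : StrictMono F := by
          intro k l hkl
          rw [Fin.lt_def] at hkl
          have key := ascent_run π ((l : ℕ) - (k : ℕ)) (s + (k : ℕ)) (by omega)
            (fun j hj1 hj2 hjdesc => by
              have := hπ' hjdesc
              rcases mem_insert.1 this with h' | h'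
              · omega
              · have := (hS j h').2; omega) (by omega)
          rw [hFdef]
          have e2 : (⟨s + (k : ℕ) + ((l : ℕ) - (k : ℕ)), by omega⟩ : Fin n)
              = ⟨s + (l : ℕ), by omega⟩ := Fin.ext (by simp only [Fin.val_mk]; omega)
          rwa [e2] at key
        have hFeq := Finset.orderEmbOfFin_unique (compl_card Tπ hTπ) hFmem hFmono
        rw [← congrFun hFeq ⟨(i : ℕ) - s, by omega⟩]
        rw [hFdef]
        exact congrArg (⇑π) (Fin.ext (by simp only [Fin.val_mk]; omega))

lemma alphaP_mod {p : ℕ} [Fact p.Prime] :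
    ∀ (k n : ℕ) (S : Finset ℕ), S.card = k → S ⊆ Finset.Icc 1 (p * n - 1) →
    ((alphaP (p * n) S : ℕ) : ZMod p) =
      if ∀ x ∈ S, p ∣ x then ((alphaP n (S.image (· / p)) : ℕ) : ZMod p) else 0 := by
  have hp2 : 2 ≤ p := (Fact.out : p.Prime).two_le
  intro k
  induction k using Nat.strong_induction_on with
  | _ k ih =>
    intro n S hcard hsub
    rcases S.eq_empty_or_nonempty with rfl | hS
    · simp [alphaP_empty]
    · obtain ⟨s, hs_mem, hs_max⟩ : ∃ s, s ∈ S ∧ ∀ x ∈ S, x ≤ s :=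
        ⟨S.max' hS, S.max'_mem hS, fun x hx => S.le_max' x hx⟩
      have hs_bounds := mem_Icc.1 (hsub hs_mem)
      have hs1 : 1 ≤ s := hs_bounds.1
      have hspn : s < p * n := by omega
      have hmax : ∀ x ∈ S.erase s, 1 ≤ x ∧ x < s := by
        intro x hx
        obtain ⟨hne, hxS⟩ := mem_erase.1 hx
        have := (mem_Icc.1 (hsub hxS)).1
        have hle := hs_max x hxS
        exact ⟨this, lt_of_le_of_ne hle hne⟩
      have hins : insert s (S.erase s) = S := insert_erase hs_mem
      have hL : alphaP (p * n) S = (p * n).choose s * alphaP s (S.erase s) := by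
        conv_lhs => rw [← hins]
        exact alphaP_insert (p * n) s (S.erase s) hs1 hspn hmax
      rw [hL, Nat.cast_mul]
      have hk1 : 1 ≤ k := by
        rw [← hcard]; exact card_pos.2 hS
      by_cases hps : p ∣ s
      · obtain ⟨s', hs'eq⟩ : ∃ s', p * s' = s := ⟨s / p, Nat.mul_div_cancel' hps⟩
        subst hs'eq
        have hs'1 : 1 ≤ s' := by
          rcases Nat.eq_zero_or_pos s' with h0 | h
          · subst h0; simp at hs1
          · exact h
        have hs'n : s' < n := by
          by_contra hcon
          push_neg at hcon
          have : p * n ≤ p * s' := Nat.mul_le_mul_left p hcon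
          omega
        have hsub' : S.erase (p * s') ⊆ Finset.Icc 1 (p * s' - 1) := by
          intro x hx
          obtain ⟨h1, h2⟩ := hmax x hx
          rw [mem_Icc]
          omega
        have hIH := ih ((S.erase (p * s')).card)
          (by rw [card_erase_of_mem hs_mem, hcard]; omega)
          s' (S.erase (p * s')) rfl hsub'
        rw [hIH, lucas_mul]
        by_cases hall : ∀ x ∈ S, p ∣ x
        · have hall' : ∀ x ∈ S.erase (p * s'), p ∣ x :=
            fun x hx => hall x (S.erase_subset _ hx)
          rw [if_pos hall, if_pos hall']
          -- compute RHS
          set U' := (S.erase (p * s')).image (· / p) with hU'def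
          have hU'bounds : ∀ y ∈ U', 1 ≤ y ∧ y < s' := by
            intro y hy
            obtain ⟨x, hx, rfl⟩ := mem_image.1 hy
            obtain ⟨h1, h2⟩ := hmax x hx
            have hdx : p ∣ x := hall' x hx
            constructor
            · have hpx : p ≤ x := Nat.le_of_dvd (by omega) hdx
              exact Nat.one_le_div_iff (by omega) |>.2 hpx
            · rw [Nat.div_lt_iff_lt_mul (by omega : 0 < p), mul_comm]
              omega
          have key : S.image (· / p) = insert s' U' := by
            conv_lhs => rw [← hins]
            rw [Finset.image_insert]
            rw [show p * s' / p = s' from Nat.mul_div_cancel_left _ (by omega : 0 < p)]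
          rw [key, alphaP_insert n s' U' hs'1 hs'n hU'bounds, Nat.cast_mul]
        · rw [if_neg hall]
          have hnot : ¬ ∀ x ∈ S.erase (p * s'), p ∣ x := by
            intro hcon
            apply hall
            intro x hx
            by_cases hxs : x = p * s'
            · rw [hxs]; exact hps
            · exact hcon x (mem_erase.2 ⟨hxs, hx⟩)
          rw [if_neg hnot, mul_zero]
      · rw [lucas_zero n s hps, zero_mul, if_neg (fun hall => hps (hall s hs_mem))]

lemma descStat_eq_alt_zmod (p n : ℕ) (S : Finset ℕ) :
    ((descStat n S : ℕ) : ZMod p)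
      = ∑ T ∈ S.powerset, (-1) ^ (S.card - T.card) * ((alphaP n T : ℕ) : ZMod p) := by
  have h := descStat_eq_alt n S
  have h2 := congrArg (fun z : ℤ => (z : ZMod p)) h
  rw [show ((descStat n S : ℕ) : ZMod p) = (((descStat n S : ℕ) : ℤ) : ZMod p) by push_cast; rfl]
  rw [h2]
  push_cast
  rfl

lemma descStat_mod {p n : ℕ} [Fact p.Prime] (S : Finset ℕ)
    (hS : S ⊆ Finset.Icc 1 (p * n - 1)) :
    ((descStat (p * n) S : ℕ) : ZMod p) =
      (-1) ^ (S.card - (S.filter (fun x => p ∣ x)).card) *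
        ((descStat n ((S.filter (fun x => p ∣ x)).image (· / p)) : ℕ) : ZMod p) := by
  have hp2 : 2 ≤ p := (Fact.out : p.Prime).two_le
  set S₀ := S.filter (fun x => p ∣ x) with hS₀def
  set U := S₀.image (· / p) with hUdef
  have hS₀sub : S₀ ⊆ S := filter_subset _ _
  have hdvd : ∀ x ∈ S₀, p ∣ x := fun x hx => (mem_filter.1 hx).2
  have hUcard : U.card = S₀.card := by
    rw [hUdef]
    apply Finset.card_image_of_injOn
    intro x hx y hy hxy
    have hdx := hdvd x hx
    have hdy := hdvd y hy
    obtain ⟨a, rfl⟩ := hdx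
    obtain ⟨b, rfl⟩ := hdy
    simp only [Nat.mul_div_cancel_left _ (by omega : 0 < p)] at hxy
    rw [hxy]
  rw [descStat_eq_alt_zmod p (p * n) S]
  -- rewrite each alpha via alphaP_mod
  have step1 : ∑ T ∈ S.powerset, (-1 : ZMod p) ^ (S.card - T.card) * ((alphaP (p * n) T : ℕ) : ZMod p)
      = ∑ T ∈ S.powerset, (-1 : ZMod p) ^ (S.card - T.card) *
          (if ∀ x ∈ T, p ∣ x then ((alphaP n (T.image (· / p)) : ℕ) : ZMod p) else 0) := by
    refine Finset.sum_congr rfl fun T hT => ?_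
    rw [alphaP_mod T.card n T rfl ((mem_powerset.1 hT).trans hS)]
  rw [step1]
  -- restrict to subsets of S₀
  have step2 : ∑ T ∈ S₀.powerset, (-1 : ZMod p) ^ (S.card - T.card) *
          (if ∀ x ∈ T, p ∣ x then ((alphaP n (T.image (· / p)) : ℕ) : ZMod p) else 0)
      = ∑ T ∈ S.powerset, (-1 : ZMod p) ^ (S.card - T.card) *
          (if ∀ x ∈ T, p ∣ x then ((alphaP n (T.image (· / p)) : ℕ) : ZMod p) else 0) := by
    apply Finset.sum_subset (Finset.powerset_mono.2 hS₀sub)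
    intro T hT hT0
    have : ¬ ∀ x ∈ T, p ∣ x := by
      intro hcon
      apply hT0
      rw [mem_powerset]
      intro x hx
      rw [hS₀def, mem_filter]
      exact ⟨mem_powerset.1 hT hx, hcon x hx⟩
    rw [if_neg this, mul_zero]
  rw [← step2]
  -- on subsets of S₀ the if is true
  have step3 : ∑ T ∈ S₀.powerset, (-1 : ZMod p) ^ (S.card - T.card) *
          (if ∀ x ∈ T, p ∣ x then ((alphaP n (T.image (· / p)) : ℕ) : ZMod p) else 0)
      = ∑ T ∈ S₀.powerset, (-1 : ZMod p) ^ (S.card - T.card) *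
          ((alphaP n (T.image (· / p)) : ℕ) : ZMod p) := by
    refine Finset.sum_congr rfl fun T hT => ?_
    rw [if_pos (fun x hx => hdvd x (mem_powerset.1 hT hx))]
  rw [step3]
  -- reindex by division by p
  have step4 : ∑ T ∈ S₀.powerset, (-1 : ZMod p) ^ (S.card - T.card) *
          ((alphaP n (T.image (· / p)) : ℕ) : ZMod p)
      = ∑ T' ∈ U.powerset, (-1 : ZMod p) ^ (S.card - T'.card) *
          ((alphaP n T' : ℕ) : ZMod p) := by
    refine Finset.sum_nbij' (fun T => T.image (· / p)) (fun T' => T'.image (· * p)) ?_ ?_ ?_ ?_ ?_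
    · intro T hT
      rw [mem_powerset] at hT ⊢
      rw [hUdef]
      exact Finset.image_subset_image hT
    · intro T' hT'
      rw [mem_powerset] at hT' ⊢
      intro y hy
      obtain ⟨z, hz, rfl⟩ := mem_image.1 hy
      have hzU := hT' hz
      obtain ⟨x, hx, rfl⟩ := mem_image.1 hzU
      have := Nat.div_mul_cancel (hdvd x hx)
      rw [this]
      exact hx
    · intro T hT
      rw [mem_powerset] at hT
      ext x
      simp only [mem_image]
      constructor
      · rintro ⟨y, ⟨z, hz, rfl⟩, rfl⟩
        rwa [Nat.div_mul_cancel (hdvd z (hT hz))]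
      · intro hx
        exact ⟨x / p, ⟨x, hx, rfl⟩, Nat.div_mul_cancel (hdvd x (hT hx))⟩
    · intro T' hT'
      rw [mem_powerset] at hT'
      ext y
      simp only [mem_image]
      constructor
      · rintro ⟨z, ⟨w, hw, rfl⟩, rfl⟩
        rwa [Nat.mul_div_cancel _ (by omega : 0 < p)]
      · intro hy
        exact ⟨y * p, ⟨y, hy, rfl⟩, Nat.mul_div_cancel _ (by omega : 0 < p)⟩
    · intro T hT
      rw [mem_powerset] at hT
      have hcardT : (T.image (· / p)).card = T.card := by
        apply Finset.card_image_of_injOn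
        intro x hx y hy hxy
        obtain ⟨a, rfl⟩ := hdvd x (hT hx)
        obtain ⟨b, rfl⟩ := hdvd y (hT hy)
        simp only [Nat.mul_div_cancel_left _ (by omega : 0 < p)] at hxy
        rw [hxy]
      rw [hcardT]
  rw [step4]
  -- split the sign
  have step5 : ∀ T' ∈ U.powerset,
      (-1 : ZMod p) ^ (S.card - T'.card) * ((alphaP n T' : ℕ) : ZMod p)
        = (-1 : ZMod p) ^ (S.card - S₀.card) *
            ((-1 : ZMod p) ^ (U.card - T'.card) * ((alphaP n T' : ℕ) : ZMod p)) := by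
    intro T' hT'
    have h1 : T'.card ≤ U.card := Finset.card_le_card (mem_powerset.1 hT')
    have h2 : S₀.card ≤ S.card := Finset.card_le_card hS₀sub
    rw [← mul_assoc, ← pow_add]
    congr 2
    omega
  rw [Finset.sum_congr rfl step5, ← Finset.mul_sum, ← descStat_eq_alt_zmod p n U]

theorem stmt6 (p r n : ℕ) (hp : p.Prime) (hodd : Odd p)
    (hr : 0 < r) (hre : Even r) (hn : 1 ≤ n) :
    powSumDes r (p * n) ≡ powSumDes r n [MOD p] := by
  haveI : Fact p.Prime := ⟨hp⟩
  have hp2 : 2 ≤ p := hp.two_le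
  rw [← ZMod.natCast_eq_natCast_iff]
  have hcast : ∀ m : ℕ, ((powSumDes r m : ℕ) : ZMod p)
      = ∑ S ∈ (Finset.Icc 1 (m - 1)).powerset, ((descStat m S : ℕ) : ZMod p) ^ r := by
    intro m
    rw [powSumDes]
    push_cast
    rfl
  rw [hcast, hcast]
  -- bounds facts
  have hbound : ∀ S : Finset ℕ, S ⊆ Finset.Icc 1 (p * n - 1) →
      (S.filter (fun x => p ∣ x)).image (· / p) ⊆ Finset.Icc 1 (n - 1) := by
    intro S hS y hy
    obtain ⟨x, hx, rfl⟩ := mem_image.1 hy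
    obtain ⟨hxS, hdx⟩ := mem_filter.1 hx
    have hxI := mem_Icc.1 (hS hxS)
    obtain ⟨a, haeq⟩ := hdx
    subst haeq
    rw [Nat.mul_div_cancel_left _ (by omega : 0 < p)]
    rw [mem_Icc]
    have ha1 : 1 ≤ a := by
      rcases Nat.eq_zero_or_pos a with rfl | h
      · simp at hxI
      · exact h
    have ha2 : a ≤ n - 1 := by
      by_contra hcon
      push_neg at hcon
      have hna : n ≤ a := by omega
      have := Nat.mul_le_mul_left p hna
      omega
    exact ⟨ha1, ha2⟩
  -- step 1: termwise rewrite
  have hterm : ∀ S ∈ (Finset.Icc 1 (p * n - 1)).powerset,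
      ((descStat (p * n) S : ℕ) : ZMod p) ^ r
      = ((descStat n ((S.filter (fun x => p ∣ x)).image (· / p)) : ℕ) : ZMod p) ^ r := by
    intro S hSmem
    rw [descStat_mod S (mem_powerset.1 hSmem), mul_pow]
    have hone : ((-1 : ZMod p) ^ (S.card - (S.filter (fun x => p ∣ x)).card)) ^ r = 1 := by
      rw [← pow_mul, mul_comm, pow_mul, hre.neg_one_pow, one_pow]
    rw [hone, one_mul]
  rw [Finset.sum_congr rfl hterm]
  -- step 2: reindex over pairs
  set N := (Finset.Icc 1 (p * n - 1)).filter (fun x => ¬ p ∣ x) with hNdef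
  have hVnotdvd : ∀ V : Finset ℕ, V ⊆ N → ∀ x ∈ V, ¬ p ∣ x := by
    intro V hV x hx
    have := hV hx
    rw [hNdef, mem_filter] at this
    exact this.2
  have himgI : ∀ U : Finset ℕ, U ⊆ Finset.Icc 1 (n - 1) →
      U.image (· * p) ⊆ Finset.Icc 1 (p * n - 1) := by
    intro U hU x hx
    obtain ⟨u, hu, rfl⟩ := mem_image.1 hx
    have hu' := mem_Icc.1 (hU hu)
    rw [mem_Icc]
    have h1 : 1 ≤ u * p := Nat.mul_pos (by omega) (by omega)
    have h2 : u * p ≤ (n - 1) * p := Nat.mul_le_mul_right p hu'.2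
    have h3 : (n - 1) * p = n * p - p := by rw [Nat.sub_mul, one_mul]
    have h4 : n * p = p * n := mul_comm n p
    exact ⟨h1, by omega⟩
  have key : ∑ S ∈ (Finset.Icc 1 (p * n - 1)).powerset,
      ((descStat n ((S.filter (fun x => p ∣ x)).image (· / p)) : ℕ) : ZMod p) ^ r
      = ∑ UV ∈ (Finset.Icc 1 (n - 1)).powerset ×ˢ N.powerset,
          ((descStat n UV.1 : ℕ) : ZMod p) ^ r := by
    refine Finset.sum_nbij'
      (fun S => ((S.filter (fun x => p ∣ x)).image (· / p), S.filter (fun x => ¬ p ∣ x)))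
      (fun UV => UV.1.image (· * p) ∪ UV.2) ?_ ?_ ?_ ?_ ?_
    · intro S hSmem
      rw [Finset.mem_product]
      constructor
      · exact mem_powerset.2 (hbound S (mem_powerset.1 hSmem))
      · rw [mem_powerset]
        intro x hx
        obtain ⟨h1, h2⟩ := mem_filter.1 hx
        rw [hNdef, mem_filter]
        exact ⟨mem_powerset.1 hSmem h1, h2⟩
    · intro UV hUV
      obtain ⟨hU, hV⟩ := Finset.mem_product.1 hUV
      rw [mem_powerset] at hU hV ⊢
      apply Finset.union_subset
      · exact himgI UV.1 hU
      · intro x hx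
        have := hV hx
        rw [hNdef, mem_filter] at this
        exact this.1
    · -- left inverse
      intro S hSmem
      have h1 : ((S.filter (fun x => p ∣ x)).image (· / p)).image (· * p)
          = S.filter (fun x => p ∣ x) := by
        ext x
        simp only [mem_image]
        constructor
        · rintro ⟨y, ⟨z, hz, rfl⟩, rfl⟩
          rwa [Nat.div_mul_cancel (mem_filter.1 hz).2]
        · intro hx
          exact ⟨x / p, ⟨x, hx, rfl⟩, Nat.div_mul_cancel (mem_filter.1 hx).2⟩
      simp only
      rw [h1, Finset.filter_union_filter_not_eq]
    · -- right inverse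
      intro UV hUV
      obtain ⟨hU, hV⟩ := Finset.mem_product.1 hUV
      rw [mem_powerset] at hU hV
      have hVnd : ∀ x ∈ UV.2, ¬ p ∣ x := hVnotdvd UV.2 hV
      have h1 : (UV.1.image (· * p) ∪ UV.2).filter (fun x => p ∣ x) = UV.1.image (· * p) := by
        ext x
        simp only [mem_filter, mem_union]
        constructor
        · rintro ⟨hx | hx, hdx⟩
          · exact hx
          · exact absurd hdx (hVnd x hx)
        · intro hx
          obtain ⟨u, hu, rfl⟩ := mem_image.1 hx
          exact ⟨Or.inl hx, dvd_mul_left p u⟩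
      have h2 : (UV.1.image (· * p) ∪ UV.2).filter (fun x => ¬ p ∣ x) = UV.2 := by
        ext x
        simp only [mem_filter, mem_union]
        constructor
        · rintro ⟨hx | hx, hdx⟩
          · obtain ⟨u, hu, rfl⟩ := mem_image.1 hx
            exact absurd (dvd_mul_left p u) hdx
          · exact hx
        · intro hx
          exact ⟨Or.inr hx, hVnd x hx⟩
      have h3 : (UV.1.image (· * p)).image (· / p) = UV.1 := by
        ext u
        simp only [mem_image]
        constructor
        · rintro ⟨y, ⟨v, hv, rfl⟩, rfl⟩
          rwa [Nat.mul_div_cancel _ (by omega : 0 < p)]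
        · intro hu
          exact ⟨u * p, ⟨u, hu, rfl⟩, Nat.mul_div_cancel _ (by omega : 0 < p)⟩
      have : ((UV.1.image (· * p) ∪ UV.2).filter (fun x => p ∣ x)).image (· / p) = UV.1 := by
        rw [h1, h3]
      rw [this, h2]
    · intro S hSmem
      rfl
  rw [key, Finset.sum_product]
  -- step 3: collapse the inner constant sum
  have hinner : ∀ U ∈ (Finset.Icc 1 (n - 1)).powerset,
      (∑ _V ∈ N.powerset, ((descStat n U : ℕ) : ZMod p) ^ r)
        = ((descStat n U : ℕ) : ZMod p) ^ r := by
    intro U hU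
    rw [Finset.sum_const, Finset.card_powerset]
    have hMJ : (Finset.Icc 1 (p * n - 1)).filter (fun x => p ∣ x)
        = (Finset.Icc 1 (n - 1)).image (· * p) := by
      ext x
      rw [mem_filter, mem_image]
      constructor
      · rintro ⟨hxI, hdx⟩
        have hxI' := mem_Icc.1 hxI
        obtain ⟨a, haeq⟩ := hdx
        subst haeq
        refine ⟨a, mem_Icc.2 ⟨?_, ?_⟩, mul_comm a p⟩
        · rcases Nat.eq_zero_or_pos a with rfl | h
          · simp at hxI'
          · exact h
        · by_contra hcon
          push_neg at hcon
          have hna : n ≤ a := by omega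
          have := Nat.mul_le_mul_left p hna
          omega
      · rintro ⟨u, hu, rfl⟩
        have := himgI {u} (by simp [hu]) (by simp : u * p ∈ ({u} : Finset ℕ).image (· * p))
        exact ⟨this, dvd_mul_left p u⟩
    have hMcard : ((Finset.Icc 1 (p * n - 1)).filter (fun x => p ∣ x)).card = n - 1 := by
      rw [hMJ, Finset.card_image_of_injective _
        (fun a b h => Nat.eq_of_mul_eq_mul_right (by omega : 0 < p) h), Nat.card_Icc]
      omega
    have hMN := Finset.card_filter_add_card_filter_not
      (s := Finset.Icc 1 (p * n - 1)) (p := fun x => p ∣ x)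
    have hIcard : (Finset.Icc 1 (p * n - 1)).card = p * n - 1 := by rw [Nat.card_Icc]; omega
    have hpn : n ≤ p * n := Nat.le_mul_of_pos_left n (by omega)
    have hNc : N.card = (p - 1) * n := by
      have h3 : (p - 1) * n = p * n - n := by rw [Nat.sub_mul, one_mul]
      rw [hNdef]
      omega
    rw [hNc]
    have h2ne : (2 : ZMod p) ≠ 0 := by
      intro hcon
      have h2' : ((2 : ℕ) : ZMod p) = 0 := by exact_mod_cast hcon
      rw [ZMod.natCast_eq_zero_iff] at h2'
      have hpe : p = 2 := ((Nat.prime_dvd_prime_iff_eq hp Nat.prime_two).1 h2')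
      rw [hpe] at hodd
      exact (Nat.not_odd_iff_even.2 (by decide)) hodd
    have hfermat : (2 : ZMod p) ^ (p - 1) = 1 := ZMod.pow_card_sub_one_eq_one h2ne
    rw [nsmul_eq_mul]
    push_cast
    rw [pow_mul, hfermat, one_pow, one_mul]
  rw [Finset.sum_congr rfl hinner]
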